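/- Let n ≥ 1, r ≥ 1, and let c ∈ ℝ^n define the hyperplane h = {x ∈ ℝ^n : ∑_{i=1}^n c_i x_i = 1} with weight w(h) > 1 − r/n. Then the number of indices i with c_i > 1 is at most r − 1. -/

import Mathlib

lemma cycle_lemma (t : ℕ) (ht : 0 < t) (d : ℕ → ℝ) (hper : ∀ i, d (i + t) = d i)
    (hsum : ∑ i ∈ Finset.range t, d i = 1) :
    ∃ k < t, d k ≤ 1 ∧ ∀ j, 0 < j → j < t → ∑ i ∈ Finset.range j, d (k + i) ≠ 1 := by
  set s : ℕ → ℝ := fun j => ∑ i ∈ Finset.range j, d i with hs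
  have hshift : ∀ j, s (j + t) = s j + 1 := by
    intro j
    induction j with
    | zero => simpa [s] using hsum
    | succ m ih =>
        have h1 : s (m + 1 + t) = s (m + t) + d (m + t) := by
          have : m + 1 + t = (m + t) + 1 := by ring
          rw [this]; simp [s, Finset.sum_range_succ]
        rw [h1, ih, hper]
        simp [s, Finset.sum_range_succ]; ring
  have hseg : ∀ k j, ∑ i ∈ Finset.range j, d (k + i) = s (k + j) - s k := by
    intro k j
    induction j with
    | zero => simp
    | succ m ih =>
        rw [Finset.sum_range_succ, ih]
        have : s (k + (m + 1)) = s (k + m) + d (k + m) := by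
          have : k + (m + 1) = (k + m) + 1 := by ring
          rw [this]; simp [s, Finset.sum_range_succ]
        rw [this]; ring
  -- choose minimal argmax
  have hne : ((Finset.range t).filter (fun k => ∀ j ∈ Finset.range t, s j ≤ s k)).Nonempty := by
    obtain ⟨k, hk, hmax⟩ := Finset.exists_max_image (Finset.range t) s ⟨0, by simp [ht]⟩
    exact ⟨k, Finset.mem_filter.2 ⟨hk, hmax⟩⟩
  set A := (Finset.range t).filter (fun k => ∀ j ∈ Finset.range t, s j ≤ s k) with hA
  set k := A.min' hne with hk
  have hkA : k ∈ A := A.min'_mem hne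
  obtain ⟨hkt, hkmax⟩ := Finset.mem_filter.1 hkA
  have hkt' : k < t := Finset.mem_range.1 hkt
  have hs0 : s 0 = 0 := by simp [s]
  refine ⟨k, hkt', ?_, ?_⟩
  · -- d k ≤ 1
    have hdk : d k = s (k + 1) - s k := by
      have h := hseg k 1
      simpa using h
    rcases lt_or_eq_of_le (Nat.succ_le_of_lt hkt') with h | h
    · have : s (k + 1) ≤ s k := hkmax _ (Finset.mem_range.2 h)
      nlinarith [hs0]
    · have h1 : s (k + 1) = s 0 + 1 := by rw [show k + 1 = t from h]; simpa using hshift 0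
      have h0 : s 0 ≤ s k := hkmax _ (Finset.mem_range.2 ht)
      nlinarith
  · intro j hj0 hjt
    rw [hseg]
    rcases lt_or_ge (k + j) t with h | h
    · have : s (k + j) ≤ s k := hkmax _ (Finset.mem_range.2 h)
      intro hc; nlinarith
    · obtain ⟨m, hmeq⟩ : ∃ m, k + j = m + t := ⟨k + j - t, by omega⟩
      have hm : m < t := by omega
      have hmk : m < k := by omega
      have hsm : s (k + j) = s m + 1 := by rw [hmeq, hshift]
      have hle : s m ≤ s k := hkmax _ (Finset.mem_range.2 hm)
      have hne2 : s m ≠ s k := by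
        intro hEq
        have hmem : m ∈ A := by
          refine Finset.mem_filter.2 ⟨Finset.mem_range.2 hm, ?_⟩
          intro j' hj'; rw [hEq]; exact hkmax j' hj'
        have := A.min'_le _ hmem
        omega
      intro hc; rw [hsm] at hc
      exact hne2 (by linarith)

open Finset

variable {n : ℕ}

/-- position `i` as an element of `Fin n` (via mod). -/
def posq (hn : 0 < n) (i : ℕ) : Fin n := ⟨i % n, Nat.mod_lt _ hn⟩

lemma posq_val (hn : 0 < n) (i : ℕ) (hi : i < n) : (posq hn i : ℕ) = i :=
  Nat.mod_eq_of_lt hi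

/-- set of elements occupying the first `j` positions of `σ`. -/
def pre (σ : Equiv.Perm (Fin n)) (j : ℕ) : Finset (Fin n) :=
  univ.filter (fun x => (σ.symm x : ℕ) < j)

lemma mem_pre {σ : Equiv.Perm (Fin n)} {j : ℕ} {x : Fin n} :
    x ∈ pre σ j ↔ (σ.symm x : ℕ) < j := by simp [pre]

lemma pre_eq_image (σ : Equiv.Perm (Fin n)) (j : ℕ) :
    pre σ j = (univ.filter (fun p : Fin n => (p : ℕ) < j)).image σ := by
  ext x
  rw [mem_pre, Finset.mem_image]
  constructor
  · intro h
    refine ⟨σ.symm x, ?_, by simp⟩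
    rw [Finset.mem_filter]
    exact ⟨Finset.mem_univ _, h⟩
  · rintro ⟨p, hp, rfl⟩
    rw [Finset.mem_filter] at hp
    simpa using hp.2

lemma card_filter_val_lt (j : ℕ) (hj : j ≤ n) :
    ((univ : Finset (Fin n)).filter (fun p : Fin n => (p : ℕ) < j)).card = j := by
  have h : ((univ : Finset (Fin n)).filter (fun p : Fin n => (p : ℕ) < j)) =
      (Finset.range j).attachFin
        (fun m hm => lt_of_lt_of_le (Finset.mem_range.1 hm) hj) := by
    ext a; simp
  rw [h, Finset.card_attachFin, Finset.card_range]

lemma pre_card (σ : Equiv.Perm (Fin n)) (j : ℕ) (hj : j ≤ n) : (pre σ j).card = j := by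
  rw [pre_eq_image, Finset.card_image_of_injective _ σ.injective, card_filter_val_lt j hj]

/-- prefix sum of `c` values along `σ`. -/
noncomputable def psum (c : Fin n → ℝ) (σ : Equiv.Perm (Fin n)) (j : ℕ) : ℝ :=
  ∑ x ∈ pre σ j, c x

lemma psum_eq_sum_range (hn : 0 < n) (c : Fin n → ℝ) (σ : Equiv.Perm (Fin n)) (j : ℕ)
    (hj : j ≤ n) : psum c σ j = ∑ i ∈ Finset.range j, c (σ (posq hn i)) := by
  rw [psum, pre_eq_image, Finset.sum_image (fun a _ b _ h => σ.injective h)]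
  refine Finset.sum_nbij' (i := fun p : Fin n => (p : ℕ)) (j := fun i : ℕ => posq hn i)
    ?_ ?_ ?_ ?_ ?_
  · intro a ha
    rw [Finset.mem_filter] at ha
    simpa using ha.2
  · intro i hi
    rw [Finset.mem_range] at hi
    rw [Finset.mem_filter]
    refine ⟨Finset.mem_univ _, ?_⟩
    rw [posq_val hn i (lt_of_lt_of_le hi hj)]
    exact hi
  · intro a ha
    rw [Finset.mem_filter] at ha
    apply Fin.val_injective
    rw [posq_val hn _ (lt_of_lt_of_le ha.2 hj)]
  · intro i hi
    rw [Finset.mem_range] at hi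
    exact posq_val hn i (lt_of_lt_of_le hi hj)
  · intro a ha
    rw [Finset.mem_filter] at ha
    have h2 : posq hn (a : ℕ) = a :=
      Fin.val_injective (posq_val hn _ (lt_of_lt_of_le ha.2 hj))
    rw [h2]

/-- rotate the first `t` positions by `k`. -/
def rotFun (n t k : ℕ) : Fin n → Fin n := fun p =>
  if h : (p : ℕ) < t ∧ t ≤ n then
    ⟨((p : ℕ) + k) % t, lt_of_lt_of_le (Nat.mod_lt _ (by omega)) h.2⟩
  else p

lemma rotFun_lt_iff (t k : ℕ) (p : Fin n) :
    ((rotFun n t k p : ℕ) < t) ↔ ((p : ℕ) < t) := by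
  unfold rotFun
  split_ifs with h
  · have ht : 0 < t := by omega
    simp only [Nat.mod_lt _ ht, h.1]
  · tauto

lemma rotFun_injective (t k : ℕ) : Function.Injective (rotFun n t k) := by
  intro a b hab
  by_cases ha : (a : ℕ) < t ∧ t ≤ n <;> by_cases hb : (b : ℕ) < t ∧ t ≤ n
  · simp only [rotFun, dif_pos ha, dif_pos hb] at hab
    have ht : 0 < t := by omega
    have h1 : ((a : ℕ) + k) % t = ((b : ℕ) + k) % t := by
      simpa [Fin.ext_iff] using hab
    have h2 : (a : ℕ) % t = (b : ℕ) % t :=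
      Nat.ModEq.add_right_cancel' k h1
    rw [Nat.mod_eq_of_lt ha.1, Nat.mod_eq_of_lt hb.1] at h2
    exact Fin.val_injective h2
  · exfalso
    simp only [rotFun, dif_pos ha, dif_neg hb] at hab
    have : (b : ℕ) < t := by
      rw [← hab]
      exact Nat.mod_lt _ (by omega)
    exact hb ⟨this, ha.2⟩
  · exfalso
    simp only [rotFun, dif_neg ha, dif_pos hb] at hab
    have : (a : ℕ) < t := by
      rw [hab]
      exact Nat.mod_lt _ (by omega)
    exact ha ⟨this, hb.2⟩
  · simpa [rotFun, dif_neg ha, dif_neg hb] using hab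

/-- rotation of first `t` positions by `k`, as a permutation. -/
noncomputable def rotPerm (n t k : ℕ) : Equiv.Perm (Fin n) :=
  Equiv.ofBijective _ (Finite.injective_iff_bijective.1 (rotFun_injective (n := n) t k))

lemma rotPerm_apply (t k : ℕ) (p : Fin n) : rotPerm n t k p = rotFun n t k p := rfl

lemma pre_rotPerm (σ : Equiv.Perm (Fin n)) (t k : ℕ) :
    pre ((rotPerm n t k).trans σ) t = pre σ t := by
  ext x
  rw [mem_pre, mem_pre]
  have h1 : ((rotPerm n t k).trans σ).symm x = (rotPerm n t k).symm (σ.symm x) := rfl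
  rw [h1]
  set p := (rotPerm n t k).symm (σ.symm x) with hp
  have h2 : rotFun n t k p = σ.symm x := by
    rw [← rotPerm_apply, hp, Equiv.apply_symm_apply]
  rw [← h2, rotFun_lt_iff]

lemma rotPerm_trans_apply (hn : 0 < n) (σ : Equiv.Perm (Fin n)) (t k i : ℕ)
    (ht : 0 < t) (htn : t ≤ n) (hi : i < t) :
    ((rotPerm n t k).trans σ) (posq hn i) = σ (posq hn ((i + k) % t)) := by
  have h1 : (posq hn i : ℕ) = i := posq_val hn i (lt_of_lt_of_le hi htn)
  have h2 : rotFun n t k (posq hn i) = posq hn ((i + k) % t) := by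
    unfold rotFun
    rw [dif_pos (by rw [h1]; exact ⟨hi, htn⟩)]
    apply Fin.val_injective
    rw [posq_val hn _ (lt_of_lt_of_le (Nat.mod_lt _ ht) htn)]
    simp [h1]
  have : ((rotPerm n t k).trans σ) (posq hn i) = σ (rotFun n t k (posq hn i)) := rfl
  rw [this, h2]

lemma exists_good_rotation (hn : 0 < n) (c : Fin n → ℝ) (σ : Equiv.Perm (Fin n)) (t : ℕ)
    (ht : 0 < t) (htn : t ≤ n) (hsum : psum c σ t = 1) :
    ∃ k < t,
      pre ((rotPerm n t k).trans σ) t = pre σ t ∧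
      (∀ j, 0 < j → j < t → psum c ((rotPerm n t k).trans σ) j ≠ 1) ∧
      c (((rotPerm n t k).trans σ) (posq hn 0)) ≤ 1 := by
  set d : ℕ → ℝ := fun i => c (σ (posq hn (i % t))) with hd
  have hper : ∀ i, d (i + t) = d i := by
    intro i; simp only [hd, Nat.add_mod_right]
  have hdsum : ∑ i ∈ Finset.range t, d i = 1 := by
    rw [← hsum, psum_eq_sum_range hn c σ t htn]
    apply Finset.sum_congr rfl
    intro i hi
    rw [Finset.mem_range] at hi
    simp [hd, Nat.mod_eq_of_lt hi]
  obtain ⟨k, hk, hdk, hgood⟩ := cycle_lemma t ht d hper hdsum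
  refine ⟨k, hk, pre_rotPerm σ t k, ?_, ?_⟩
  · intro j hj0 hjt
    rw [psum_eq_sum_range hn c _ j (le_trans (le_of_lt hjt) htn)]
    have heq : ∀ i ∈ Finset.range j, c (((rotPerm n t k).trans σ) (posq hn i)) = d (k + i) := by
      intro i hi
      rw [Finset.mem_range] at hi
      rw [rotPerm_trans_apply hn σ t k i ht htn (lt_trans hi hjt)]
      simp only [hd]
      congr 2
      rw [Nat.add_comm i k]
    rw [Finset.sum_congr rfl heq]
    exact hgood j hj0 hjt
  · rw [rotPerm_trans_apply hn σ t k 0 ht htn ht]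
    have : ((0 : ℕ) + k) % t = k % t := by simp
    rw [this]
    have hk' : k % t = k := Nat.mod_eq_of_lt hk
    rw [hk']
    have : c (σ (posq hn k)) = d k := by simp [hd, hk']
    rw [this]
    exact hdk

lemma card_le_fin (S : Finset (Fin n)) : S.card ≤ n := by
  have := Finset.card_le_univ S
  simpa using this

/-- permutation putting `S` in the first block of positions, built from a pair of equivs -/
noncomputable def buildPerm (S : Finset (Fin n))
    (a : Fin S.card ≃ {x : Fin n // x ∈ S}) (b : Fin (n - S.card) ≃ {x : Fin n // ¬ x ∈ S}) :
    Equiv.Perm (Fin n) :=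
  ((finCongr (by have := card_le_fin S; omega : n = S.card + (n - S.card))).trans
      finSumFinEquiv.symm).trans
    ((Equiv.sumCongr a b).trans (Equiv.sumCompl (· ∈ S)))

lemma buildPerm_mem (S : Finset (Fin n))
    (a : Fin S.card ≃ {x : Fin n // x ∈ S}) (b : Fin (n - S.card) ≃ {x : Fin n // ¬ x ∈ S})
    (p : Fin n) (hp : (p : ℕ) < S.card) : buildPerm S a b p ∈ S := by
  unfold buildPerm
  have hn' : n = S.card + (n - S.card) := by have := card_le_fin S; omega
  have h1 : finSumFinEquiv.symm (finCongr hn' p) = Sum.inl (⟨(p : ℕ), hp⟩ : Fin S.card) := by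
    rw [Equiv.symm_apply_eq, finSumFinEquiv_apply_left]
    apply Fin.val_injective
    simp
  simp only [Equiv.trans_apply, h1, Equiv.sumCongr_apply, Sum.map_inl,
    Equiv.sumCompl_apply_inl]
  exact (a ⟨(p : ℕ), hp⟩).2

lemma pre_buildPerm (S : Finset (Fin n))
    (a : Fin S.card ≃ {x : Fin n // x ∈ S}) (b : Fin (n - S.card) ≃ {x : Fin n // ¬ x ∈ S}) :
    pre (buildPerm S a b) S.card = S := by
  apply Finset.eq_of_subset_of_card_le
  · rw [pre_eq_image]
    intro x hx
    rw [Finset.mem_image] at hx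
    obtain ⟨p, hp, rfl⟩ := hx
    rw [Finset.mem_filter] at hp
    exact buildPerm_mem S a b p hp.2
  · rw [pre_card _ _ (card_le_fin S)]

lemma buildPerm_injective (S : Finset (Fin n)) :
    Function.Injective (fun ab : (Fin S.card ≃ {x : Fin n // x ∈ S}) ×
        (Fin (n - S.card) ≃ {x : Fin n // ¬ x ∈ S}) => buildPerm S ab.1 ab.2) := by
  rintro ⟨a, b⟩ ⟨a', b'⟩ h
  simp only [buildPerm] at h
  set X := ((finCongr (by have := card_le_fin S; omega :
      n = S.card + (n - S.card))).trans finSumFinEquiv.symm) with hX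
  have cancel : ∀ Y : (Fin S.card ⊕ Fin (n - S.card)) ≃ Fin n, X.symm.trans (X.trans Y) = Y := by
    intro Y
    rw [← Equiv.trans_assoc, Equiv.symm_trans_self, Equiv.refl_trans]
  have h2 : (Equiv.sumCongr a b).trans (Equiv.sumCompl (· ∈ S)) =
      (Equiv.sumCongr a' b').trans (Equiv.sumCompl (· ∈ S)) := by
    rw [← cancel ((Equiv.sumCongr a b).trans (Equiv.sumCompl (· ∈ S))), h,
      cancel]
  have cancel2 : ∀ Y : (Fin S.card ⊕ Fin (n - S.card)) ≃
      ({x : Fin n // x ∈ S} ⊕ {x : Fin n // ¬ x ∈ S}),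
      (Y.trans (Equiv.sumCompl (· ∈ S))).trans (Equiv.sumCompl (· ∈ S)).symm = Y := by
    intro Y
    rw [Equiv.trans_assoc, Equiv.self_trans_symm, Equiv.trans_refl]
  have h3 : Equiv.sumCongr a b = Equiv.sumCongr a' b' := by
    rw [← cancel2 (Equiv.sumCongr a b), h2, cancel2]
  have ha : a = a' :=
    Equiv.ext fun i => by simpa using congrArg (fun e : _ ≃ _ => e (Sum.inl i)) h3
  have hb : b = b' :=
    Equiv.ext fun i => by simpa using congrArg (fun e : _ ≃ _ => e (Sum.inr i)) h3
  simp [ha, hb]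

lemma permS_card_lower (S : Finset (Fin n)) :
    (S.card.factorial * (n - S.card).factorial : ℕ) ≤
      (Finset.univ.filter (fun σ : Equiv.Perm (Fin n) => pre σ S.card = S)).card := by
  classical
  have e1 : Fin S.card ≃ {x : Fin n // x ∈ S} := S.equivFin.symm
  have e2 : Fin (n - S.card) ≃ {x : Fin n // ¬ x ∈ S} := by
    apply (Fintype.equivFinOfCardEq _).symm
    rw [Fintype.card_subtype_compl]
    simp [Fintype.card_coe]
  have hcard : Fintype.card ((Fin S.card ≃ {x : Fin n // x ∈ S}) ×
      (Fin (n - S.card) ≃ {x : Fin n // ¬ x ∈ S})) =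
      S.card.factorial * (n - S.card).factorial := by
    rw [Fintype.card_prod, Fintype.card_equiv e1, Fintype.card_equiv e2]
    simp
  rw [← hcard, ← Finset.card_univ]
  apply Finset.card_le_card_of_injOn
    (fun ab => buildPerm S ab.1 ab.2)
  · intro ab _
    rw [Finset.mem_coe, Finset.mem_filter]
    exact ⟨Finset.mem_univ _, pre_buildPerm S ab.1 ab.2⟩
  · exact fun x _ y _ h => buildPerm_injective S h

open scoped Classical

/-- replace `σ` by a good rotation of its first `t` positions, if one exists. -/
noncomputable def goodify (hn : 0 < n) (c : Fin n → ℝ) (t : ℕ) (σ : Equiv.Perm (Fin n)) :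
    Equiv.Perm (Fin n) :=
  if h : ∃ k, k < t ∧ pre ((rotPerm n t k).trans σ) t = pre σ t ∧
      (∀ j, 0 < j → j < t → psum c ((rotPerm n t k).trans σ) j ≠ 1) ∧
      c (((rotPerm n t k).trans σ) (posq hn 0)) ≤ 1
  then (rotPerm n t h.choose).trans σ else σ

lemma rot_cancel (t k : ℕ) (σ : Equiv.Perm (Fin n)) :
    (rotPerm n t k).symm.trans ((rotPerm n t k).trans σ) = σ := by
  rw [← Equiv.trans_assoc, Equiv.symm_trans_self, Equiv.refl_trans]

lemma P_card_le (hn : 0 < n) (c : Fin n → ℝ) (S : Finset (Fin n)) (hS : S.Nonempty)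
    (hsum : ∑ x ∈ S, c x = 1) :
    (univ.filter (fun σ : Equiv.Perm (Fin n) => pre σ S.card = S)).card ≤
      S.card * (univ.filter (fun σ : Equiv.Perm (Fin n) => pre σ S.card = S ∧
        (∀ j, 0 < j → j < S.card → psum c σ j ≠ 1) ∧ c (σ (posq hn 0)) ≤ 1)).card := by
  set t := S.card with hts
  have ht : 0 < t := Finset.card_pos.2 hS
  have htn : t ≤ n := card_le_fin S
  have hcond : ∀ σ : Equiv.Perm (Fin n), pre σ t = S →
      ∃ k, k < t ∧ pre ((rotPerm n t k).trans σ) t = pre σ t ∧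
        (∀ j, 0 < j → j < t → psum c ((rotPerm n t k).trans σ) j ≠ 1) ∧
        c (((rotPerm n t k).trans σ) (posq hn 0)) ≤ 1 := by
    intro σ hσ
    have hps : psum c σ t = 1 := by
      rw [psum, hσ]; exact hsum
    obtain ⟨k, hk, h1, h2, h3⟩ := exists_good_rotation hn c σ t ht htn hps
    exact ⟨k, hk, h1, h2, h3⟩
  apply Finset.card_le_mul_card_image_of_maps_to
    (f := goodify hn c t)
  · intro σ hσ
    rw [Finset.mem_filter] at hσ
    have h := hcond σ hσ.2
    rw [Finset.mem_filter]
    refine ⟨Finset.mem_univ _, ?_⟩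
    unfold goodify
    rw [dif_pos h]
    obtain ⟨hk, h1, h2, h3⟩ := h.choose_spec
    exact ⟨h1.trans hσ.2, h2, h3⟩
  · intro τ _
    apply le_trans (Finset.card_le_card (t := (Finset.range t).image
      (fun k => (rotPerm n t k).symm.trans τ)) ?_)
    · exact le_trans Finset.card_image_le (by rw [Finset.card_range])
    · intro σ hσ
      rw [Finset.mem_filter, Finset.mem_filter] at hσ
      obtain ⟨⟨_, hP⟩, hgτ⟩ := hσ
      have h := hcond σ hP
      rw [Finset.mem_image]
      refine ⟨h.choose, Finset.mem_range.2 h.choose_spec.1, ?_⟩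
      rw [← hgτ]
      unfold goodify
      rw [dif_pos h, rot_cancel]

lemma count_first (hn : 0 < n) (Q : Fin n → Prop) :
    (univ.filter (fun σ : Equiv.Perm (Fin n) => Q (σ (posq hn 0)))).card =
      (univ.filter Q).card * (n - 1).factorial := by
  obtain ⟨m, rfl⟩ : ∃ m, n = m + 1 := ⟨n - 1, by omega⟩
  have hpos : posq hn 0 = (0 : Fin (m + 1)) := by
    apply Fin.val_injective
    simp [posq]
  rw [hpos]
  have hcard : (univ.filter (fun σ : Equiv.Perm (Fin (m + 1)) => Q (σ 0))).card =
      ((univ.filter Q) ×ˢ (univ : Finset (Equiv.Perm (Fin m)))).card := by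
    apply Finset.card_equiv Equiv.Perm.decomposeFin
    intro σ
    rw [Finset.mem_filter, Finset.mem_product, Finset.mem_filter]
    have hσ0 : σ 0 = (Equiv.Perm.decomposeFin σ).1 := by
      conv_lhs => rw [← Equiv.symm_apply_apply Equiv.Perm.decomposeFin σ]
      obtain ⟨p, e⟩ := Equiv.Perm.decomposeFin σ
      exact Equiv.Perm.decomposeFin_symm_apply_zero p e
    simp [hσ0]
  rw [hcard, Finset.card_product]
  simp [Fintype.card_perm]

lemma grand_count (hn : 0 < n) (c : Fin n → ℝ) :
    ∑ S ∈ (univ : Finset (Finset (Fin n))).filter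
        (fun S => S.Nonempty ∧ ∑ i ∈ S, c i = 1),
      (S.card - 1).factorial * (n - S.card).factorial ≤
    (n - (univ.filter (fun i : Fin n => 1 < c i)).card) * (n - 1).factorial := by
  set H := (univ : Finset (Finset (Fin n))).filter
      (fun S => S.Nonempty ∧ ∑ i ∈ S, c i = 1) with hH
  set G : Finset (Fin n) → Finset (Equiv.Perm (Fin n)) := fun S =>
    univ.filter (fun σ : Equiv.Perm (Fin n) => pre σ S.card = S ∧
      (∀ j, 0 < j → j < S.card → psum c σ j ≠ 1) ∧ c (σ (posq hn 0)) ≤ 1) with hG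
  -- each term bounded by the size of G S
  have step1 : ∀ S ∈ H, (S.card - 1).factorial * (n - S.card).factorial ≤ (G S).card := by
    intro S hS
    rw [hH, Finset.mem_filter] at hS
    obtain ⟨-, hne, hsum⟩ := hS
    have ht : 0 < S.card := Finset.card_pos.2 hne
    have h1 := permS_card_lower S
    have h2 := P_card_le hn c S hne hsum
    refine Nat.le_of_mul_le_mul_left ?_ ht
    calc S.card * ((S.card - 1).factorial * (n - S.card).factorial)
        = (S.card * (S.card - 1).factorial) * (n - S.card).factorial := by ring
      _ = S.card.factorial * (n - S.card).factorial := by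
          rw [Nat.mul_factorial_pred ht.ne']
      _ ≤ _ := le_trans h1 h2
  -- the G S are pairwise disjoint
  have hdisj : ∀ S ∈ H, ∀ S' ∈ H, S ≠ S' → Disjoint (G S) (G S') := by
    have key : ∀ S ∈ H, ∀ S' ∈ H, S.card < S'.card →
        ∀ σ : Equiv.Perm (Fin n), σ ∈ G S → σ ∈ G S' → False := by
      intro S hS S' hS' hlt σ hσ hσ'
      rw [hH, Finset.mem_filter] at hS
      rw [hG, Finset.mem_filter] at hσ hσ'
      obtain ⟨-, hpre, -, -⟩ := hσ
      obtain ⟨-, -, hne1, -⟩ := hσ'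
      have ht : 0 < S.card := Finset.card_pos.2 hS.2.1
      apply hne1 S.card ht hlt
      rw [psum, hpre]
      exact hS.2.2
    intro S hS S' hS' hne
    rw [Finset.disjoint_left]
    intro σ hσ hσ'
    rcases lt_trichotomy S.card S'.card with h | h | h
    · exact key S hS S' hS' h σ hσ hσ'
    · apply hne
      rw [hG, Finset.mem_filter] at hσ hσ'
      rw [← hσ.2.1, ← hσ'.2.1, h]
    · exact key S' hS' S hS h σ hσ' hσ
  -- union bound
  have step2 : ∑ S ∈ H, (G S).card ≤
      (univ.filter (fun σ : Equiv.Perm (Fin n) => c (σ (posq hn 0)) ≤ 1)).card := by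
    rw [← Finset.card_biUnion hdisj]
    apply Finset.card_le_card
    intro σ hσ
    rw [Finset.mem_biUnion] at hσ
    obtain ⟨S, -, hσ⟩ := hσ
    rw [hG, Finset.mem_filter] at hσ
    rw [Finset.mem_filter]
    exact ⟨Finset.mem_univ _, hσ.2.2.2⟩
  -- count of permutations with small first element
  have step3 : (univ.filter (fun σ : Equiv.Perm (Fin n) => c (σ (posq hn 0)) ≤ 1)).card =
      (n - (univ.filter (fun i : Fin n => 1 < c i)).card) * (n - 1).factorial := by
    rw [count_first hn (fun x => c x ≤ 1)]
    congr 1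
    have h1 : (univ.filter (fun x : Fin n => c x ≤ 1)) =
        univ \ (univ.filter (fun i : Fin n => 1 < c i)) := by
      rw [← Finset.filter_not]
      apply Finset.filter_congr
      intro x _
      simp [not_lt]
    rw [h1, Finset.card_sdiff_of_subset (Finset.filter_subset _ _)]
    simp
  calc ∑ S ∈ H, (S.card - 1).factorial * (n - S.card).factorial
      ≤ ∑ S ∈ H, (G S).card := Finset.sum_le_sum step1
    _ ≤ _ := by rw [← step3]; exact step2

open scoped Classical in
/-- The Clifton–Huang weight of the hyperplane `{x : ∑ i, c i * x i = 1}`: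
the sum over nonempty subsets `S ⊆ [n]` with `∑_{i ∈ S} c i = 1` of
`1 / (|S| * binom(n, |S|))`. -/
noncomputable def hyperplaneWeight {n : ℕ} (c : Fin n → ℝ) : ℝ :=
  ∑ S : Finset (Fin n),
    if S.Nonempty ∧ ∑ i ∈ S, c i = 1 then
      1 / (S.card * (n.choose S.card)) else 0

open scoped Classical in
theorem few_large_coefficients (n r : ℕ) (hn : 1 ≤ n) (hr : 1 ≤ r) (c : Fin n → ℝ)
    (hw : 1 - (r : ℝ) / n < hyperplaneWeight c) :
    (Finset.univ.filter (fun i : Fin n => 1 < c i)).card ≤ r - 1 := by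
  set H := (univ : Finset (Finset (Fin n))).filter
      (fun S => S.Nonempty ∧ ∑ i ∈ S, c i = 1) with hH
  set b := (Finset.univ.filter (fun i : Fin n => 1 < c i)).card with hb
  have hbn : b ≤ n := le_trans (Finset.card_le_univ _) (by simp)
  -- rewrite the weight as a sum over H
  have hW : hyperplaneWeight c = ∑ S ∈ H, 1 / (S.card * (n.choose S.card) : ℝ) := by
    rw [hyperplaneWeight, hH, Finset.sum_filter]
  -- each term equals (t-1)!(n-t)!/n!
  have hterm : ∀ S ∈ H, 1 / (S.card * (n.choose S.card) : ℝ) =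
      ((S.card - 1).factorial * (n - S.card).factorial : ℝ) / (n.factorial : ℝ) := by
    intro S hS
    rw [hH, Finset.mem_filter] at hS
    have ht : 0 < S.card := Finset.card_pos.2 hS.2.1
    have htn : S.card ≤ n := card_le_fin S
    have hkey : (S.card * (n.choose S.card)) *
        ((S.card - 1).factorial * (n - S.card).factorial) = n.factorial := by
      have h1 := Nat.choose_mul_factorial_mul_factorial htn
      calc (S.card * (n.choose S.card)) *
            ((S.card - 1).factorial * (n - S.card).factorial)
          = (n.choose S.card) * (S.card * (S.card - 1).factorial) *
            (n - S.card).factorial := by ring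
        _ = (n.choose S.card) * S.card.factorial * (n - S.card).factorial := by
            rw [Nat.mul_factorial_pred ht.ne']
        _ = n.factorial := h1
    have hpos1 : (0 : ℝ) < (S.card * (n.choose S.card) : ℝ) := by
      have : 0 < n.choose S.card := Nat.choose_pos htn
      positivity
    have hpos2 : (0 : ℝ) < (n.factorial : ℝ) := by positivity
    rw [div_eq_div_iff (ne_of_gt hpos1) (ne_of_gt hpos2)]
    rw [one_mul, mul_comm ((S.card - 1).factorial * (n - S.card).factorial : ℝ)]
    rw [← Nat.cast_mul, ← Nat.cast_mul, ← Nat.cast_mul]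
    exact_mod_cast hkey.symm
  have hn0 : (0 : ℝ) < n := by exact_mod_cast hn
  have hWle : hyperplaneWeight c ≤ ((n : ℝ) - b) / n := by
    rw [hW, Finset.sum_congr rfl hterm, ← Finset.sum_div]
    have hsum : (∑ S ∈ H, ((S.card - 1).factorial * (n - S.card).factorial : ℝ)) ≤
        ((n - b) * (n - 1).factorial : ℝ) := by
      have := grand_count (n := n) (by omega) c
      rw [← hH] at this
      calc (∑ S ∈ H, ((S.card - 1).factorial * (n - S.card).factorial : ℝ))
          = ((∑ S ∈ H, (S.card - 1).factorial * (n - S.card).factorial : ℕ) : ℝ) := by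
            push_cast; rfl
        _ ≤ (((n - b) * (n - 1).factorial : ℕ) : ℝ) := by exact_mod_cast this
        _ = ((n - b : ℕ) : ℝ) * ((n - 1).factorial : ℝ) := by push_cast; rfl
        _ = ((n : ℝ) - b) * ((n - 1).factorial : ℝ) := by
            rw [Nat.cast_sub hbn]
    have hfac : (n.factorial : ℝ) = (n : ℝ) * ((n - 1).factorial : ℝ) := by
      rw [← Nat.cast_mul]
      congr 1
      exact (Nat.mul_factorial_pred (by omega)).symm
    have hfacpos : (0 : ℝ) < (n.factorial : ℝ) := by positivity
    rw [div_le_div_iff₀ hfacpos hn0]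
    calc (∑ S ∈ H, ((S.card - 1).factorial * (n - S.card).factorial : ℝ)) * n
        ≤ (((n : ℝ) - b) * ((n - 1).factorial : ℝ)) * n := by
          apply mul_le_mul_of_nonneg_right hsum (le_of_lt hn0)
      _ = ((n : ℝ) - b) * (n.factorial : ℝ) := by rw [hfac]; ring
  -- conclude
  have hfinal : (b : ℝ) < r := by
    have h1 : 1 - (r : ℝ) / n < ((n : ℝ) - b) / n := lt_of_lt_of_le hw hWle
    have h1' : ((n : ℝ) - r) / n < ((n : ℝ) - b) / n := by
      calc ((n : ℝ) - r) / n = 1 - (r : ℝ) / n := by field_simp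
        _ < ((n : ℝ) - b) / n := h1
    have h2 : (n : ℝ) - r < (n : ℝ) - b :=
      (div_lt_div_iff_of_pos_right hn0).1 h1'
    linarith
  have : b < r := by exact_mod_cast hfinal
  omega
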